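/- Minimax for the max-entropy: for ρ_{AB} subnormalized with purification ρ_{ABC}, min_{Z: ρ_{ABC} ≤ Z_{AB}⊗id_C} max_{σ_B} tr[(id_A⊗σ_B) Z_{AB}] = max_{σ_B} min_{Z: ρ_{ABC} ≤ Z_{AB}⊗id_C} tr[(id_A⊗σ_B) Z_{AB}], where σ_B ranges over subnormalized density operators and Z_{AB} over positive semidefinite operators. -/

import Mathlib

open Matrix Kronecker ComplexOrder

noncomputable section


open scoped Classical
namespace QIT

/-- Square root of a positive semidefinite matrix (junk value `0` otherwise). -/
noncomputable def msqrt {n : Type*} [Fintype n] [DecidableEq n] (A : Matrix n n ℂ) :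
    Matrix n n ℂ :=
  if h : A.PosSemidef then
    (h.1.eigenvectorUnitary : Matrix n n ℂ) *
      Matrix.diagonal ((↑) ∘ (Real.sqrt ·) ∘ h.1.eigenvalues) *
      (star h.1.eigenvectorUnitary : Matrix n n ℂ)
  else 0

/-- Trace norm `‖A‖₁ = tr √(Aᴴ A)`. -/
noncomputable def traceNorm {n : Type*} [Fintype n] [DecidableEq n] (A : Matrix n n ℂ) : ℝ :=
  ((msqrt (Aᴴ * A)).trace).re

/-- Fidelity `F(ρ,σ) = ‖√ρ √σ‖₁`. -/
noncomputable def fidelity {n : Type*} [Fintype n] [DecidableEq n] (ρ σ : Matrix n n ℂ) : ℝ :=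
  traceNorm (msqrt ρ * msqrt σ)

/-- Generalized fidelity. -/
noncomputable def gFid {n : Type*} [Fintype n] [DecidableEq n] (ρ σ : Matrix n n ℂ) : ℝ :=
  fidelity ρ σ + Real.sqrt ((1 - ρ.trace.re) * (1 - σ.trace.re))

/-- Purified distance. -/
noncomputable def pDist {n : Type*} [Fintype n] [DecidableEq n] (ρ σ : Matrix n n ℂ) : ℝ :=
  Real.sqrt (1 - (gFid ρ σ) ^ 2)

/-- Subnormalized density operator. -/
def SubNormalized {n : Type*} [Fintype n] (ρ : Matrix n n ℂ) : Prop :=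
  ρ.PosSemidef ∧ ρ.trace.re ≤ 1

/-- Loewner order `A ≤ B`. -/
def mLE {n : Type*} [Fintype n] (A B : Matrix n n ℂ) : Prop := (B - A).PosSemidef

/-- Functional calculus for Hermitian matrices (junk value `0` otherwise). -/
noncomputable def cfcHerm {n : Type*} [Fintype n] [DecidableEq n] (A : Matrix n n ℂ)
    (f : ℝ → ℝ) : Matrix n n ℂ :=
  if hA : A.IsHermitian then
    (hA.eigenvectorUnitary : Matrix n n ℂ) *
      Matrix.diagonal (fun i => (f (hA.eigenvalues i) : ℂ)) *
      (star ((hA.eigenvectorUnitary : Matrix n n ℂ)))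
  else 0

/-- Projector onto the strictly negative eigenspaces of a Hermitian matrix. -/
noncomputable def negProj {n : Type*} [Fintype n] [DecidableEq n] (A : Matrix n n ℂ) :
    Matrix n n ℂ :=
  cfcHerm A (fun x => if x < 0 then 1 else 0)

/-- Projector onto the nonnegative eigenspaces of a Hermitian matrix. -/
noncomputable def posProj {n : Type*} [Fintype n] [DecidableEq n] (A : Matrix n n ℂ) :
    Matrix n n ℂ :=
  cfcHerm A (fun x => if 0 ≤ x then 1 else 0)

/-- Partial trace over the second (right) factor. -/
noncomputable def ptraceRight {a b : Type*} [Fintype a] [Fintype b]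
    (M : Matrix (a × b) (a × b) ℂ) : Matrix a a ℂ :=
  Matrix.of fun i j => ∑ k, M (i, k) (j, k)

/-- Partial trace over the first (left) factor. -/
noncomputable def ptraceLeft {a b : Type*} [Fintype a] [Fintype b]
    (M : Matrix (a × b) (a × b) ℂ) : Matrix b b ℂ :=
  Matrix.of fun i j => ∑ k, M (k, i) (k, j)

/-- Conditional min-entropy `H_min(A|B)_ρ`, conditioning on the second factor. -/
noncomputable def Hmin {a b : Type*} [Fintype a] [Fintype b] [DecidableEq a] [DecidableEq b]
    (ρ : Matrix (a × b) (a × b) ℂ) : ℝ :=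
  sSup {l : ℝ | ∃ σ : Matrix b b ℂ, SubNormalized σ ∧
    mLE ρ ((((2 : ℝ) ^ (-l) : ℝ)) • ((1 : Matrix a a ℂ) ⊗ₖ σ))}

/-- Relative conditional max-entropy `H_max(A|B)_{ρ|σ}`. -/
noncomputable def HmaxRel {a b : Type*} [Fintype a] [Fintype b] [DecidableEq a] [DecidableEq b]
    (ρ : Matrix (a × b) (a × b) ℂ) (σ : Matrix b b ℂ) : ℝ :=
  Real.logb 2 ((fidelity ρ ((1 : Matrix a a ℂ) ⊗ₖ σ)) ^ 2)

/-- Conditional max-entropy `H_max(A|B)_ρ`. -/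
noncomputable def Hmax {a b : Type*} [Fintype a] [Fintype b] [DecidableEq a] [DecidableEq b]
    (ρ : Matrix (a × b) (a × b) ℂ) : ℝ :=
  sSup {x : ℝ | ∃ σ : Matrix b b ℂ, SubNormalized σ ∧ x = HmaxRel ρ σ}

/-- Smooth conditional min-entropy. -/
noncomputable def sHmin {a b : Type*} [Fintype a] [Fintype b] [DecidableEq a] [DecidableEq b]
    (ε : ℝ) (ρ : Matrix (a × b) (a × b) ℂ) : ℝ :=
  sSup {x : ℝ | ∃ ρ' : Matrix (a × b) (a × b) ℂ,
    SubNormalized ρ' ∧ pDist ρ' ρ ≤ ε ∧ x = Hmin ρ'}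

/-- Smooth conditional max-entropy. -/
noncomputable def sHmax {a b : Type*} [Fintype a] [Fintype b] [DecidableEq a] [DecidableEq b]
    (ε : ℝ) (ρ : Matrix (a × b) (a × b) ℂ) : ℝ :=
  sInf {x : ℝ | ∃ ρ' : Matrix (a × b) (a × b) ℂ,
    SubNormalized ρ' ∧ pDist ρ' ρ ≤ ε ∧ x = Hmax ρ'}

/-- Operator norm of a Hermitian (in particular PSD) matrix: largest eigenvalue. -/
noncomputable def opNormPSD {n : Type*} [Fintype n] [DecidableEq n] (A : Matrix n n ℂ) : ℝ :=
  if hA : A.IsHermitian then ⨆ i, hA.eigenvalues i else 0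

end QIT

set_option linter.unusedSectionVars false
set_option maxHeartbeats 1000000

section MMAux

open Complex QIT

namespace MM

variable {n : Type*} [Fintype n] [DecidableEq n]

lemma quad_conj {A : Matrix n n ℂ} (hA : A.IsHermitian) (x : n → ℂ) :
    star (star x ⬝ᵥ A *ᵥ x) = star x ⬝ᵥ A *ᵥ x := by
  rw [← star_dotProduct, star_mulVec, ← dotProduct_mulVec, hA.eq]

lemma quad_im_zero {A : Matrix n n ℂ} (hA : A.IsHermitian) (x : n → ℂ) :
    (star x ⬝ᵥ A *ᵥ x).im = 0 := by
  have := congrArg Complex.im (quad_conj hA x)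
  simp only [Complex.star_def, Complex.conj_im] at this
  linarith

lemma psd_of_herm_re {A : Matrix n n ℂ} (hA : A.IsHermitian)
    (h : ∀ x : n → ℂ, 0 ≤ (star x ⬝ᵥ A *ᵥ x).re) : A.PosSemidef := by
  refine PosSemidef.of_dotProduct_mulVec_nonneg hA fun x => ?_
  rw [Complex.le_def]
  refine ⟨by simpa using h x, by simpa using (quad_im_zero hA x).symm⟩

lemma psd_re_quad {A : Matrix n n ℂ} (hA : A.PosSemidef) (x : n → ℂ) :
    0 ≤ (star x ⬝ᵥ A *ᵥ x).re := by
  have := hA.dotProduct_mulVec_nonneg x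
  rw [Complex.le_def] at this
  simpa using this.1

lemma psd_smul {A : Matrix n n ℂ} (hA : A.PosSemidef) {r : ℝ} (hr : 0 ≤ r) :
    (r • A).PosSemidef := by
  refine psd_of_herm_re ?_ fun x => ?_
  · show (r • A)ᴴ = r • A
    rw [conjTranspose_smul, star_trivial, hA.1.eq]
  · have : star x ⬝ᵥ (r • A) *ᵥ x = r • (star x ⬝ᵥ A *ᵥ x) := by
      rw [smul_mulVec, dotProduct_smul]
    rw [this, Complex.smul_re]
    exact mul_nonneg hr (psd_re_quad hA x)

lemma psd_diag_re_nonneg {A : Matrix n n ℂ} (hA : A.PosSemidef) (i : n) : 0 ≤ (A i i).re := by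
  have h := hA.dotProduct_mulVec_nonneg (Pi.single i 1)
  have h2 : star (Pi.single i 1 : n → ℂ) ⬝ᵥ A *ᵥ Pi.single i 1 = A i i := by
    simp [dotProduct, mulVec, Pi.single_apply, Finset.sum_ite_eq]
  rw [h2, Complex.le_def] at h
  simpa using h.1

lemma trace_re_nonneg {A : Matrix n n ℂ} (hA : A.PosSemidef) : 0 ≤ A.trace.re := by
  rw [Matrix.trace, Complex.re_sum]
  exact Finset.sum_nonneg fun i _ => psd_diag_re_nonneg hA i

lemma normSq_sum_mul_le (f g : n → ℂ) :
    normSq (∑ j, f j * g j) ≤ (∑ j, normSq (f j)) * (∑ j, normSq (g j)) := by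
  have h1 : ‖∑ j, f j * g j‖ ≤ ∑ j, ‖f j‖ * ‖g j‖ := by
    refine (norm_sum_le Finset.univ (fun j => f j * g j)).trans_eq ?_
    simp [norm_mul]
  calc normSq (∑ j, f j * g j) = ‖∑ j, f j * g j‖ ^ 2 := (Complex.sq_norm _).symm
    _ ≤ (∑ j, ‖f j‖ * ‖g j‖) ^ 2 := by
        exact pow_le_pow_left₀ (by positivity) h1 2
    _ ≤ (∑ j, ‖f j‖ ^ 2) * (∑ j, ‖g j‖ ^ 2) :=
        Finset.sum_mul_sq_le_sq_mul_sq _ _ _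
    _ = (∑ j, normSq (f j)) * (∑ j, normSq (g j)) := by simp [Complex.sq_norm]

lemma trace_conjTranspose_mul_self_re (S : Matrix n n ℂ) :
    ((Sᴴ * S).trace).re = ∑ j, ∑ i, normSq (S i j) := by
  simp [Matrix.trace, Matrix.diag, Matrix.mul_apply, Matrix.conjTranspose_apply,
    Complex.re_sum, Complex.normSq_apply]

open scoped MatrixOrder in
lemma psd_sqrt_ex {A : Matrix n n ℂ} (hA : A.PosSemidef) :
    ∃ S : Matrix n n ℂ, Sᴴ = S ∧ S * S = A :=
  ⟨CFC.sqrt A, (nonneg_iff_posSemidef.mp (CFC.sqrt_nonneg A)).1,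
    CFC.sqrt_mul_sqrt_self A (nonneg_iff_posSemidef.mpr hA)⟩

lemma psd_trace_eq_zero {A : Matrix n n ℂ} (hA : A.PosSemidef) (h : A.trace.re = 0) : A = 0 := by
  obtain ⟨S, hherm, hSS⟩ := psd_sqrt_ex hA
  have hS : (S)ᴴ * S = A := by rw [hherm, hSS]
  have h2 : ∑ j, ∑ i, normSq (S i j) = 0 := by
    rw [← trace_conjTranspose_mul_self_re, hS, h]
  have h3 : S = 0 := by
    ext i j
    have hj := (Finset.sum_eq_zero_iff_of_nonneg (fun j _ => Finset.sum_nonneg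
      (fun i _ => normSq_nonneg _))).mp h2 j (Finset.mem_univ j)
    have hij := (Finset.sum_eq_zero_iff_of_nonneg (fun i _ => normSq_nonneg _)).mp hj i
      (Finset.mem_univ i)
    simpa [Complex.normSq_eq_zero] using hij
  rw [← hS, h3]; simp



-- placeholders from chunk 1


lemma star_dot_self (x : n → ℂ) : star x ⬝ᵥ x = ((∑ i, normSq (x i) : ℝ) : ℂ) := by
  simp [dotProduct, Complex.normSq_eq_conj_mul_self]

lemma quad_le_trace {σ : Matrix n n ℂ} (hσ : σ.PosSemidef) (x : n → ℂ) :
    (star x ⬝ᵥ σ *ᵥ x).re ≤ σ.trace.re * ∑ i, normSq (x i) := by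
  obtain ⟨S, hherm, hSS⟩ := psd_sqrt_ex hσ
  have hA : σ = Sᴴ * S := by rw [hherm, hSS]
  have hq : star x ⬝ᵥ σ *ᵥ x = ((∑ i, normSq ((S *ᵥ x) i) : ℝ) : ℂ) := by
    rw [hA, ← Matrix.mulVec_mulVec, dotProduct_mulVec, ← star_mulVec, star_dot_self]
  have htr : σ.trace.re = ∑ j, ∑ i, normSq (S i j) := by
    conv_lhs => rw [hA]
    exact trace_conjTranspose_mul_self_re S
  rw [hq, htr]
  simp only [Complex.ofReal_re]
  have hrow : ∀ i, normSq ((S *ᵥ x) i) ≤ (∑ j, normSq (S i j)) * ∑ j, normSq (x j) := by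
    intro i
    simpa [Matrix.mulVec, dotProduct] using normSq_sum_mul_le (fun j => S i j) x
  calc ∑ i, normSq ((S *ᵥ x) i) ≤ ∑ i, (∑ j, normSq (S i j)) * ∑ j, normSq (x j) :=
        Finset.sum_le_sum fun i _ => hrow i
    _ = (∑ j, ∑ i, normSq (S i j)) * ∑ i, normSq (x i) := by
        rw [← Finset.sum_mul, Finset.sum_comm]

lemma psd_le_trace_one {σ : Matrix n n ℂ} (hσ : σ.PosSemidef) :
    ((σ.trace.re : ℝ) • (1 : Matrix n n ℂ) - σ).PosSemidef := by
  refine psd_of_herm_re ?_ fun x => ?_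
  · show _ᴴ = _
    rw [conjTranspose_sub, conjTranspose_smul, star_trivial, conjTranspose_one, hσ.1.eq]
  · rw [sub_mulVec, dotProduct_sub, Complex.sub_re, smul_mulVec, one_mulVec,
      dotProduct_smul, Complex.smul_re, star_dot_self]
    have := quad_le_trace hσ x
    simp only [Complex.ofReal_re, smul_eq_mul]
    linarith

lemma trace_mul_re_nonneg {A B : Matrix n n ℂ} (hA : A.PosSemidef) (hB : B.PosSemidef) :
    0 ≤ ((A * B).trace).re := by
  obtain ⟨S, hherm, hSS⟩ := psd_sqrt_ex hA
  have h1 : (A * B).trace = (Sᴴ * B * S).trace := by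
    conv_lhs => rw [← hSS]
    rw [Matrix.mul_assoc, Matrix.trace_mul_comm,
      show S * B * S = Sᴴ * B * S by rw [hherm]]
  rw [h1]
  exact trace_re_nonneg (hB.conjTranspose_mul_mul_same S)

lemma trace_mul_mono {A B C : Matrix n n ℂ} (hA : A.PosSemidef) (h : (C - B).PosSemidef) :
    ((A * B).trace).re ≤ ((A * C).trace).re := by
  have h0 := trace_mul_re_nonneg hA h
  rw [Matrix.mul_sub, Matrix.trace_sub, Complex.sub_re] at h0
  linarith

lemma vecMulVec_mulVec (v w y : n → ℂ) :
    Matrix.vecMulVec v w *ᵥ y = (w ⬝ᵥ y) • v := by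
  funext i
  simp [Matrix.mulVec, Matrix.vecMulVec_apply, dotProduct, Finset.mul_sum, mul_comm,
    mul_left_comm]

lemma quad_vecMulVec (v x : n → ℂ) :
    star x ⬝ᵥ (Matrix.vecMulVec v (star v) *ᵥ x) = ((normSq (star v ⬝ᵥ x) : ℝ) : ℂ) := by
  rw [vecMulVec_mulVec, dotProduct_smul, star_dotProduct, smul_eq_mul, Complex.star_def]
  rw [Complex.conj_mul', Complex.normSq_eq_norm_sq]
  rw [RCLike.norm_conj]
  push_cast
  ring





lemma vecMulVec_herm (x : n → ℂ) : (Matrix.vecMulVec x (star x)).IsHermitian := by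
  show _ᴴ = _
  ext i j
  simp [Matrix.conjTranspose_apply, Matrix.vecMulVec_apply, mul_comm]

lemma vecMulVec_psd (x : n → ℂ) : (Matrix.vecMulVec x (star x)).PosSemidef := by
  refine psd_of_herm_re (vecMulVec_herm x) fun y => ?_
  rw [quad_vecMulVec]
  simpa using normSq_nonneg _

lemma trace_mul_vecMulVec (A : Matrix n n ℂ) (x : n → ℂ) :
    (A * Matrix.vecMulVec x (star x)).trace = star x ⬝ᵥ (A *ᵥ x) := by
  simp only [Matrix.trace, Matrix.diag, Matrix.mul_apply, Matrix.vecMulVec_apply,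
    dotProduct, Matrix.mulVec, Pi.star_apply, Finset.mul_sum]
  exact Finset.sum_congr rfl fun i _ => Finset.sum_congr rfl fun j _ => by ring

lemma quad_real_smul (N : Matrix n n ℂ) (s : ℝ) (y : n → ℂ) :
    star (s • y) ⬝ᵥ N *ᵥ (s • y) = (s * s) • (star y ⬝ᵥ N *ᵥ y) := by
  rw [star_smul, star_trivial, smul_dotProduct, Matrix.mulVec_smul, dotProduct_smul,
    smul_smul]

-- partial trace lemmas
variable {a b : Type*} [Fintype a] [Fintype b] [DecidableEq a] [DecidableEq b]

lemma ptraceLeft_herm {Z : Matrix (a × b) (a × b) ℂ} (hZ : Z.IsHermitian) :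
    (ptraceLeft Z).IsHermitian := by
  show _ᴴ = _
  ext i j
  simp only [Matrix.conjTranspose_apply, ptraceLeft, Matrix.of_apply, star_sum]
  exact Finset.sum_congr rfl fun k _ => congrFun (congrFun hZ.eq (k, i)) (k, j)

lemma ptraceLeft_add (Y Z : Matrix (a × b) (a × b) ℂ) :
    ptraceLeft (Y + Z) = ptraceLeft Y + ptraceLeft Z := by
  ext i j; simp [ptraceLeft, Finset.sum_add_distrib]

lemma ptraceLeft_smul (r : ℝ) (Z : Matrix (a × b) (a × b) ℂ) :
    ptraceLeft (r • Z) = r • ptraceLeft Z := by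
  ext i j; simp [ptraceLeft, Finset.smul_sum]

lemma ptraceLeft_trace (Z : Matrix (a × b) (a × b) ℂ) :
    (ptraceLeft Z).trace = Z.trace := by
  simp only [Matrix.trace, Matrix.diag, ptraceLeft, Matrix.of_apply]
  rw [Fintype.sum_prod_type]
  exact Finset.sum_comm

lemma sum_rotate {α β γ : Type*} [Fintype α] [Fintype β] [Fintype γ] (t : α → β → γ → ℂ) :
    ∑ k : α, ∑ i : β, ∑ j : γ, t k i j = ∑ i : β, ∑ j : γ, ∑ k : α, t k i j := by
  rw [Finset.sum_comm]
  exact Finset.sum_congr rfl fun i _ => Finset.sum_comm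

lemma ptraceLeft_psd {Z : Matrix (a × b) (a × b) ℂ} (hZ : Z.PosSemidef) :
    (ptraceLeft Z).PosSemidef := by
  refine psd_of_herm_re (ptraceLeft_herm hZ.1) fun x => ?_
  have hterm : ∀ k : a, star (fun p : a × b => if p.1 = k then x p.2 else 0) ⬝ᵥ
      Z *ᵥ (fun p : a × b => if p.1 = k then x p.2 else 0)
      = ∑ i : b, ∑ j : b, star (x i) * (Z (k, i) (k, j) * x j) := by
    intro k
    simp only [dotProduct, Matrix.mulVec, Fintype.sum_prod_type, Pi.star_apply,
      apply_ite (star : ℂ → ℂ), star_zero, ite_mul, zero_mul, mul_ite, mul_zero,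
      Finset.sum_ite_irrel, Finset.sum_const_zero,
      Finset.sum_ite_eq', Finset.mem_univ, if_true, Finset.mul_sum]
  have key : star x ⬝ᵥ (ptraceLeft Z) *ᵥ x
      = ∑ k : a, star (fun p : a × b => if p.1 = k then x p.2 else 0) ⬝ᵥ
          Z *ᵥ (fun p : a × b => if p.1 = k then x p.2 else 0) := by
    simp only [hterm]
    rw [sum_rotate (fun k i j => star (x i) * (Z (k, i) (k, j) * x j))]
    simp only [dotProduct, Matrix.mulVec, ptraceLeft, Matrix.of_apply, Pi.star_apply,
      Finset.mul_sum, Finset.sum_mul]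
  rw [key, Complex.re_sum]
  exact Finset.sum_nonneg fun k _ => psd_re_quad hZ _

lemma trace_one_kron_mul (σ : Matrix b b ℂ) (Z : Matrix (a × b) (a × b) ℂ) :
    (((1 : Matrix a a ℂ) ⊗ₖ σ) * Z).trace = (σ * ptraceLeft Z).trace := by
  simp only [Matrix.trace, Matrix.diag, Matrix.mul_apply, ptraceLeft, Matrix.of_apply,
    Matrix.kroneckerMap_apply, Matrix.one_apply, Fintype.sum_prod_type, ite_mul, zero_mul,
    one_mul, Finset.mul_sum, Finset.sum_ite_eq, Finset.sum_ite_eq', Finset.mem_univ, if_true]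
  simp only [Finset.sum_ite_irrel, Finset.sum_const_zero, Finset.sum_ite_eq,
    Finset.mem_univ, if_true]
  exact sum_rotate (fun k i j => σ i j * Z (k, j) (k, i))





/-- the open set of matrices whose "λ·1 - M" quadratic form is positive on the unit sphere -/
def quadPos (lam : ℝ) : Set (Matrix n n ℂ) :=
  {M | ∀ x : n → ℂ, ‖x‖ = 1 → 0 < (star x ⬝ᵥ ((lam • (1 : Matrix n n ℂ) - M) *ᵥ x)).re}

lemma continuous_quad (lam : ℝ) :
    Continuous (fun p : (n → ℂ) × Matrix n n ℂ =>
      (star p.1 ⬝ᵥ ((lam • (1 : Matrix n n ℂ) - p.2) *ᵥ p.1)).re) := by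
  have h : ∀ (i j : n), Continuous (fun p : (n → ℂ) × Matrix n n ℂ => p.2 i j) :=
    fun i j => ((continuous_apply j).comp ((continuous_apply i).comp continuous_snd))
  have hx : ∀ (i : n), Continuous (fun p : (n → ℂ) × Matrix n n ℂ => p.1 i) :=
    fun i => (continuous_apply i).comp continuous_fst
  simp only [dotProduct, Matrix.mulVec, Pi.star_apply, Matrix.sub_apply,
    Matrix.smul_apply, Matrix.one_apply, Complex.re_sum]
  refine continuous_finset_sum _ fun i _ => Complex.continuous_re.comp ?_
  refine Continuous.mul (continuous_star.comp (hx i)) ?_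
  exact continuous_finset_sum _ fun j _ =>
    Continuous.mul (continuous_const.sub (h i j)) (hx j)

lemma isOpen_quadPos (lam : ℝ) : IsOpen (quadPos lam : Set (Matrix n n ℂ)) := by
  rw [← compl_compl (quadPos lam)]
  rw [isOpen_compl_iff]
  have hcpt : CompactSpace (Metric.sphere (0 : n → ℂ) 1) :=
    isCompact_iff_compactSpace.mp (isCompact_sphere 0 1)
  have hmap : IsClosedMap (Prod.snd :
      (Metric.sphere (0 : n → ℂ) 1) × Matrix n n ℂ → Matrix n n ℂ) :=
    isClosedMap_snd_of_compactSpace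
  have hset : (quadPos lam : Set (Matrix n n ℂ))ᶜ = Prod.snd ''
      {p : (Metric.sphere (0 : n → ℂ) 1) × Matrix n n ℂ |
        (star (p.1 : n → ℂ) ⬝ᵥ ((lam • (1 : Matrix n n ℂ) - p.2) *ᵥ (p.1 : n → ℂ))).re ≤ 0} := by
    ext M
    constructor
    · intro hM
      simp only [quadPos, Set.mem_compl_iff, Set.mem_setOf_eq, not_forall, not_lt] at hM
      obtain ⟨x, hx1, hx2⟩ := hM
      exact ⟨(⟨x, by simpa using hx1⟩, M), hx2, rfl⟩
    · rintro ⟨⟨⟨x, hx⟩, M'⟩, hle, rfl⟩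
      simp only [quadPos, Set.mem_compl_iff, Set.mem_setOf_eq, not_forall, not_lt]
      exact ⟨x, by simpa using hx, hle⟩
  rw [hset]
  apply hmap
  exact isClosed_le ((continuous_quad lam).comp
    ((continuous_subtype_val.comp continuous_fst).prodMk continuous_snd)) continuous_const

lemma convex_quadPos (lam : ℝ) : Convex ℝ (quadPos lam : Set (Matrix n n ℂ)) := by
  intro M₁ h₁ M₂ h₂ s t hs ht hst
  intro x hx
  have hlin : lam • (1 : Matrix n n ℂ) - (s • M₁ + t • M₂)
      = s • (lam • (1 : Matrix n n ℂ) - M₁) + t • (lam • (1 : Matrix n n ℂ) - M₂) := by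
    have h1 : s • (lam • (1 : Matrix n n ℂ)) + t • (lam • (1 : Matrix n n ℂ)) = lam • 1 := by
      rw [← add_smul, hst, one_smul]
    rw [smul_sub, smul_sub,
      show s • (lam • (1:Matrix n n ℂ)) - s • M₁ + (t • (lam • (1:Matrix n n ℂ)) - t • M₂)
        = s • (lam • (1:Matrix n n ℂ)) + t • (lam • (1:Matrix n n ℂ)) - (s • M₁ + t • M₂) by abel,
      h1]
  rw [hlin, Matrix.add_mulVec, dotProduct_add, Complex.add_re, Matrix.smul_mulVec,
    Matrix.smul_mulVec, dotProduct_smul, dotProduct_smul, Complex.smul_re,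
    Complex.smul_re]
  simp only [smul_eq_mul]
  rcases eq_or_lt_of_le hs with h | h
  · have ht1 : t = 1 := by linarith
    rw [← h, ht1]
    simpa using h₂ x hx
  · have h2 : 0 ≤ t * (star x ⬝ᵥ (lam • 1 - M₂) *ᵥ x).re :=
      mul_nonneg ht (le_of_lt (h₂ x hx))
    have h1 : 0 < s * (star x ⬝ᵥ (lam • 1 - M₁) *ᵥ x).re := mul_pos h (h₁ x hx)
    linarith



lemma stdBasis_decomp (i j : n) (z : ℂ) :
    Matrix.single i j z
      = z.re • Matrix.single i j (1 : ℂ) + z.im • Matrix.single i j Complex.I := by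
  ext k l
  by_cases h : i = k ∧ j = l
  · obtain ⟨rfl, rfl⟩ := h
    simp only [Matrix.single, Matrix.of_apply, Matrix.add_apply, Matrix.smul_apply,
      and_self, if_true, Complex.real_smul, mul_one]
    exact (Complex.re_add_im z).symm
  · simp [Matrix.single, Matrix.add_apply, Matrix.smul_apply, if_neg h]

noncomputable def wmat (f : Matrix n n ℂ →L[ℝ] ℝ) : Matrix n n ℂ :=
  Matrix.of fun j i => ((f (Matrix.single i j (1:ℂ)) : ℝ) : ℂ)
    - Complex.I * ((f (Matrix.single i j Complex.I) : ℝ) : ℂ)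

lemma wmat_rep (f : Matrix n n ℂ →L[ℝ] ℝ) (M : Matrix n n ℂ) :
    f M = (((wmat f) * M).trace).re := by
  have htr : (((wmat f) * M).trace).re = ∑ j, ∑ i, ((wmat f) j i * M i j).re := by
    simp [Matrix.trace, Matrix.diag, Matrix.mul_apply, Complex.re_sum]
  rw [htr, Finset.sum_comm]
  have hM : M = ∑ i, ∑ j, Matrix.single i j (M i j) :=
    Matrix.matrix_eq_sum_single M
  conv_lhs => rw [hM]
  rw [map_sum]
  refine Finset.sum_congr rfl fun i _ => ?_
  rw [map_sum]
  refine Finset.sum_congr rfl fun j _ => ?_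
  conv_lhs => rw [stdBasis_decomp i j (M i j)]
  rw [map_add, _root_.map_smul, _root_.map_smul]
  simp only [wmat, Matrix.of_apply, smul_eq_mul]
  simp [Complex.mul_re, Complex.sub_re, Complex.sub_im, Complex.mul_im]
  ring

lemma trace_conjTranspose_mul_herm (W M : Matrix n n ℂ) (hM : M.IsHermitian) :
    (Wᴴ * M).trace = star ((W * M).trace) := by
  have h1 : Wᴴ * M = (Mᴴ * W)ᴴ := by
    rw [Matrix.conjTranspose_mul, Matrix.conjTranspose_conjTranspose]
  rw [h1, Matrix.trace_conjTranspose, hM.eq, Matrix.trace_mul_comm]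

lemma quad_nonneg_of_sphere {N : Matrix n n ℂ}
    (h : ∀ x : n → ℂ, ‖x‖ = 1 → 0 < (star x ⬝ᵥ N *ᵥ x).re) (x : n → ℂ) :
    0 ≤ (star x ⬝ᵥ N *ᵥ x).re := by
  rcases eq_or_ne x 0 with rfl | hx
  · simp
  · have hxpos : 0 < ‖x‖ := norm_pos_iff.mpr hx
    have hx'1 : ‖(‖x‖)⁻¹ • x‖ = 1 := by
      rw [norm_smul, norm_inv, norm_norm, inv_mul_cancel₀ (ne_of_gt hxpos)]
    have hq := h _ hx'1
    rw [quad_real_smul N (‖x‖)⁻¹ x, Complex.smul_re, smul_eq_mul] at hq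
    have hc : 0 < (‖x‖)⁻¹ * (‖x‖)⁻¹ := by positivity
    nlinarith

end MM

end MMAux

open Complex QIT in
theorem MM.core {a b c : Type*} [Fintype a] [Fintype b] [Fintype c]
    [DecidableEq a] [DecidableEq b] [DecidableEq c]
    (ρABC : Matrix ((a × b) × c) ((a × b) × c) ℂ)
    (Z₀ : Matrix (a × b) (a × b) ℂ) (hZ₀psd : Z₀.PosSemidef)
    (hZ₀le : mLE ρABC (Z₀ ⊗ₖ (1 : Matrix c c ℂ))) :
    sInf {x : ℝ | ∃ Z : Matrix (a × b) (a × b) ℂ, Z.PosSemidef ∧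
        mLE ρABC (Z ⊗ₖ (1 : Matrix c c ℂ)) ∧
        x = sSup {y : ℝ | ∃ σ : Matrix b b ℂ, SubNormalized σ ∧
          y = ((((1 : Matrix a a ℂ) ⊗ₖ σ) * Z).trace).re}} =
    sSup {x : ℝ | ∃ σ : Matrix b b ℂ, SubNormalized σ ∧
        x = sInf {y : ℝ | ∃ Z : Matrix (a × b) (a × b) ℂ, Z.PosSemidef ∧
          mLE ρABC (Z ⊗ₖ (1 : Matrix c c ℂ)) ∧
          y = ((((1 : Matrix a a ℂ) ⊗ₖ σ) * Z).trace).re}} := by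
  classical
  let IS : Matrix (a × b) (a × b) ℂ → Set ℝ := fun Z =>
    {y : ℝ | ∃ σ : Matrix b b ℂ, SubNormalized σ ∧
      y = ((((1 : Matrix a a ℂ) ⊗ₖ σ) * Z).trace).re}
  let IT : Matrix b b ℂ → Set ℝ := fun σ =>
    {y : ℝ | ∃ Z : Matrix (a × b) (a × b) ℂ, Z.PosSemidef ∧
      mLE ρABC (Z ⊗ₖ (1 : Matrix c c ℂ)) ∧
      y = ((((1 : Matrix a a ℂ) ⊗ₖ σ) * Z).trace).re}
  show sInf {x : ℝ | ∃ Z, Z.PosSemidef ∧ mLE ρABC (Z ⊗ₖ (1 : Matrix c c ℂ)) ∧ x = sSup (IS Z)}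
      = sSup {x : ℝ | ∃ σ, SubNormalized σ ∧ x = sInf (IT σ)}
  set S := {x : ℝ | ∃ Z, Z.PosSemidef ∧ mLE ρABC (Z ⊗ₖ (1 : Matrix c c ℂ)) ∧ x = sSup (IS Z)}
    with hSdef
  set T := {x : ℝ | ∃ σ, SubNormalized σ ∧ x = sInf (IT σ)} with hTdef
  have honesub : SubNormalized (0 : Matrix b b ℂ) := ⟨Matrix.PosSemidef.zero, by simp⟩
  have hgzero : ∀ Z : Matrix (a × b) (a × b) ℂ,
      ((((1 : Matrix a a ℂ) ⊗ₖ (0 : Matrix b b ℂ)) * Z).trace).re = 0 := by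
    intro Z; rw [Matrix.kronecker_zero]; simp
  have hptr : ∀ (σ : Matrix b b ℂ) (Z : Matrix (a × b) (a × b) ℂ),
      ((((1 : Matrix a a ℂ) ⊗ₖ σ) * Z).trace).re = ((σ * ptraceLeft Z).trace).re := by
    intro σ Z; rw [MM.trace_one_kron_mul]
  have hg0 : ∀ (σ : Matrix b b ℂ) (Z : Matrix (a × b) (a × b) ℂ), SubNormalized σ →
      Z.PosSemidef → 0 ≤ ((((1 : Matrix a a ℂ) ⊗ₖ σ) * Z).trace).re := by
    intro σ Z hσ hZ
    rw [hptr]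
    exact MM.trace_mul_re_nonneg hσ.1 (MM.ptraceLeft_psd hZ)
  have hgub : ∀ (σ : Matrix b b ℂ) (Z : Matrix (a × b) (a × b) ℂ), SubNormalized σ →
      Z.PosSemidef → ((((1 : Matrix a a ℂ) ⊗ₖ σ) * Z).trace).re ≤ Z.trace.re := by
    intro σ Z hσ hZ
    rw [hptr]
    have hM := MM.ptraceLeft_psd hZ
    have h1 : ((σ * ptraceLeft Z).trace).re = (((ptraceLeft Z) * σ).trace).re := by
      rw [Matrix.trace_mul_comm]
    have h2 := MM.trace_mul_mono hM (MM.psd_le_trace_one hσ.1)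
    have h3 : ((ptraceLeft Z * ((σ.trace.re : ℝ) • (1 : Matrix b b ℂ))).trace).re
        = σ.trace.re * (ptraceLeft Z).trace.re := by
      rw [Matrix.mul_smul, Matrix.mul_one, Matrix.trace_smul, Complex.smul_re, smul_eq_mul]
    have htr : (ptraceLeft Z).trace = Z.trace := MM.ptraceLeft_trace Z
    have hσ1 : σ.trace.re ≤ 1 := hσ.2
    have hZtr : 0 ≤ (ptraceLeft Z).trace.re := MM.trace_re_nonneg hM
    rw [h1]
    rw [h3, htr] at h2
    rw [htr] at hZtr
    nlinarith
  have hISzero : ∀ Z : Matrix (a × b) (a × b) ℂ, (0 : ℝ) ∈ IS Z := by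
    intro Z; exact ⟨0, honesub, (hgzero Z).symm⟩
  have hISbdd : ∀ Z : Matrix (a × b) (a × b) ℂ, Z.PosSemidef → BddAbove (IS Z) := by
    intro Z hZ
    refine ⟨Z.trace.re, ?_⟩
    rintro y ⟨σ, hσ, rfl⟩
    exact hgub σ Z hσ hZ
  have hITne : ∀ σ : Matrix b b ℂ,
      ((((1 : Matrix a a ℂ) ⊗ₖ σ) * Z₀).trace).re ∈ IT σ := by
    intro σ; exact ⟨Z₀, hZ₀psd, hZ₀le, rfl⟩
  have hITbdd : ∀ σ : Matrix b b ℂ, SubNormalized σ → BddBelow (IT σ) := by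
    intro σ hσ
    refine ⟨0, ?_⟩
    rintro y ⟨Z, hZ1, hZ2, rfl⟩
    exact hg0 σ Z hσ hZ1
  have hSne : S.Nonempty := ⟨sSup (IS Z₀), Z₀, hZ₀psd, hZ₀le, rfl⟩
  have hSbdd : BddBelow S := by
    refine ⟨0, ?_⟩
    rintro x ⟨Z, hZ1, hZ2, rfl⟩
    exact le_csSup (hISbdd Z hZ1) (hISzero Z)
  have hT0 : (0 : ℝ) ∈ T := by
    refine ⟨0, honesub, ?_⟩
    have hsingle : IT 0 = {(0 : ℝ)} := by
      ext y
      constructor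
      · rintro ⟨Z, hZ1, hZ2, rfl⟩
        simp [hgzero Z]
      · rintro hy
        rw [Set.mem_singleton_iff] at hy
        exact ⟨Z₀, hZ₀psd, hZ₀le, hy.trans (hgzero Z₀).symm⟩
    rw [hsingle, csInf_singleton]
  have hTne : T.Nonempty := ⟨0, hT0⟩
  have hTbdd : BddAbove T := by
    refine ⟨Z₀.trace.re, ?_⟩
    rintro x ⟨σ, hσ, rfl⟩
    exact (csInf_le (hITbdd σ hσ) (hITne σ)).trans (hgub σ Z₀ hσ hZ₀psd)
  have hβ0 : 0 ≤ sSup T := le_csSup hTbdd hT0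
  have hweak : sSup T ≤ sInf S := by
    refine le_csInf hSne ?_
    rintro x ⟨Z, hZ1, hZ2, rfl⟩
    refine csSup_le hTne ?_
    rintro t ⟨σ, hσ, rfl⟩
    exact (csInf_le (hITbdd σ hσ) ⟨Z, hZ1, hZ2, rfl⟩).trans
      (le_csSup (hISbdd Z hZ1) ⟨σ, hσ, rfl⟩)
  refine le_antisymm ?_ hweak
  refine le_of_forall_pos_le_add fun ε hε => ?_
  set lam := sSup T + ε with hlam
  have hlampos : 0 < lam := by
    rw [hlam]; linarith
  have hclaim : ∃ Z : Matrix (a × b) (a × b) ℂ,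
      (Z.PosSemidef ∧ mLE ρABC (Z ⊗ₖ (1 : Matrix c c ℂ))) ∧
      (lam • (1 : Matrix b b ℂ) - ptraceLeft Z).PosSemidef := by
    by_contra hno
    have hCconv : Convex ℝ {M : Matrix b b ℂ | ∃ Z : Matrix (a × b) (a × b) ℂ,
        (Z.PosSemidef ∧ mLE ρABC (Z ⊗ₖ (1 : Matrix c c ℂ))) ∧ M = ptraceLeft Z} := by
      rintro M₁ ⟨Y, ⟨hY1, hY2⟩, rfl⟩ M₂ ⟨Z, ⟨hZ1, hZ2⟩, rfl⟩ s t hs ht hst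
      refine ⟨s • Y + t • Z, ⟨?_, ?_⟩, ?_⟩
      · exact (MM.psd_smul hY1 hs).add (MM.psd_smul hZ1 ht)
      · show ((s • Y + t • Z) ⊗ₖ (1 : Matrix c c ℂ) - ρABC).PosSemidef
        have hk : (s • Y + t • Z) ⊗ₖ (1 : Matrix c c ℂ)
            = s • (Y ⊗ₖ (1 : Matrix c c ℂ)) + t • (Z ⊗ₖ (1 : Matrix c c ℂ)) := by
          rw [Matrix.add_kronecker, Matrix.smul_kronecker, Matrix.smul_kronecker]
        have hρ : ρABC = s • ρABC + t • ρABC := by rw [← add_smul, hst, one_smul]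
        rw [hk, show s • (Y ⊗ₖ (1 : Matrix c c ℂ)) + t • (Z ⊗ₖ (1 : Matrix c c ℂ)) - ρABC
            = s • (Y ⊗ₖ (1 : Matrix c c ℂ) - ρABC) + t • (Z ⊗ₖ (1 : Matrix c c ℂ) - ρABC) by
          rw [smul_sub, smul_sub]; conv_lhs => rw [hρ]
          abel]
        exact (MM.psd_smul hY2 hs).add (MM.psd_smul hZ2 ht)
      · rw [MM.ptraceLeft_add, MM.ptraceLeft_smul, MM.ptraceLeft_smul]
    have hdisj : Disjoint (MM.quadPos lam : Set (Matrix b b ℂ))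
        {M : Matrix b b ℂ | ∃ Z : Matrix (a × b) (a × b) ℂ,
          (Z.PosSemidef ∧ mLE ρABC (Z ⊗ₖ (1 : Matrix c c ℂ))) ∧ M = ptraceLeft Z} := by
      rw [Set.disjoint_left]
      rintro M hMU ⟨Z, hZF, rfl⟩
      refine hno ⟨Z, hZF, ?_⟩
      refine MM.psd_of_herm_re ?_ fun x => ?_
      · show _ᴴ = _
        rw [Matrix.conjTranspose_sub, Matrix.conjTranspose_smul, star_trivial,
          Matrix.conjTranspose_one, (MM.ptraceLeft_herm hZF.1.1).eq]
      · exact MM.quad_nonneg_of_sphere hMU x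
    obtain ⟨f, u, hfU, hfC⟩ := geometric_hahn_banach_open (MM.convex_quadPos lam)
      (MM.isOpen_quadPos lam) hCconv hdisj
    set W := MM.wmat f with hW
    set Wh : Matrix b b ℂ := (2⁻¹ : ℝ) • (W + Wᴴ) with hWh
    have hWhherm : Wh.IsHermitian := by
      show _ᴴ = _
      rw [hWh, Matrix.conjTranspose_smul, star_trivial, Matrix.conjTranspose_add,
        Matrix.conjTranspose_conjTranspose, add_comm Wᴴ W]
    have hfherm : ∀ M : Matrix b b ℂ, M.IsHermitian → ((Wh * M).trace).re = f M := by
      intro M hM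
      rw [hWh, Matrix.smul_mul, Matrix.add_mul, Matrix.trace_smul, Matrix.trace_add,
        MM.trace_conjTranspose_mul_herm W M hM, Complex.smul_re, MM.wmat_rep f M]
      simp only [Complex.add_re, Complex.star_def, Complex.conj_re, smul_eq_mul]
      ring
    have hmemU : ∀ P : Matrix b b ℂ, P.PosSemidef → ∀ t ε' : ℝ, 0 ≤ t → 0 < ε' →
        (lam • (1 : Matrix b b ℂ) - (t • P + ε' • (1 : Matrix b b ℂ))) ∈ MM.quadPos lam := by
      intro P hP t ε' ht hε' x hx
      rw [sub_sub_cancel, Matrix.add_mulVec, dotProduct_add, Complex.add_re,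
        Matrix.smul_mulVec, Matrix.smul_mulVec, dotProduct_smul, dotProduct_smul,
        Complex.smul_re, Complex.smul_re, Matrix.one_mulVec, MM.star_dot_self]
      have h1 : 0 ≤ (star x ⬝ᵥ P *ᵥ x).re := MM.psd_re_quad hP x
      have h2 : 0 < ∑ i, Complex.normSq (x i) := by
        have hx0 : x ≠ 0 := by
          intro h0; rw [h0] at hx; simp at hx
        obtain ⟨i, hi⟩ := Function.ne_iff.mp hx0
        refine Finset.sum_pos' (fun j _ => Complex.normSq_nonneg _) ⟨i, Finset.mem_univ i, ?_⟩
        exact Complex.normSq_pos.mpr hi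
      simp only [Complex.ofReal_re, smul_eq_mul]
      nlinarith
    have hs1 : ∀ P : Matrix b b ℂ, P.PosSemidef → ∀ t ε' : ℝ, 0 ≤ t → 0 < ε' →
        lam * f 1 - (t * f P + ε' * f 1) < u := by
      intro P hP t ε' ht hε'
      have h := hfU _ (hmemU P hP t ε' ht hε')
      rw [map_sub, map_add, _root_.map_smul, _root_.map_smul, _root_.map_smul] at h
      simpa [smul_eq_mul] using h
    have hs3 : lam * f 1 ≤ u := by
      by_contra hcon
      push_neg at hcon
      set δ := lam * f 1 - u with hδ
      have hδpos : 0 < δ := by rw [hδ]; linarith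
      have h := hs1 0 Matrix.PosSemidef.zero 0 (δ / (|f 1| + 1)) le_rfl (by positivity)
      rw [map_zero] at h
      have habs : (δ / (|f 1| + 1)) * f 1 ≤ δ := by
        calc (δ / (|f 1| + 1)) * f 1 ≤ (δ / (|f 1| + 1)) * (|f 1| + 1) := by
              refine mul_le_mul_of_nonneg_left ?_ (by positivity)
              linarith [le_abs_self (f 1)]
          _ = δ := div_mul_cancel₀ _ (by positivity)
      rw [hδ] at habs
      linarith
    have hs2 : ∀ P : Matrix b b ℂ, P.PosSemidef → ∀ t : ℝ, 0 ≤ t →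
        lam * f 1 - t * f P ≤ u := by
      intro P hP t ht
      by_contra hcon
      push_neg at hcon
      set δ := lam * f 1 - t * f P - u with hδ
      have hδpos : 0 < δ := by rw [hδ]; linarith
      have h := hs1 P hP t (δ / (|f 1| + 1)) ht (by positivity)
      have habs : (δ / (|f 1| + 1)) * f 1 ≤ δ := by
        calc (δ / (|f 1| + 1)) * f 1 ≤ (δ / (|f 1| + 1)) * (|f 1| + 1) := by
              refine mul_le_mul_of_nonneg_left ?_ (by positivity)
              linarith [le_abs_self (f 1)]
          _ = δ := div_mul_cancel₀ _ (by positivity)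
      rw [hδ] at habs
      linarith
    have hs4 : ∀ P : Matrix b b ℂ, P.PosSemidef → 0 ≤ f P := by
      intro P hP
      by_contra hcon
      push_neg at hcon
      have hne : -f P ≠ 0 := by
        have : 0 < -f P := by linarith
        exact ne_of_gt this
      have ht : 0 ≤ (u + 1 - lam * f 1) / (-f P) := by
        apply div_nonneg
        · linarith
        · linarith
      have h := hs2 P hP _ ht
      have hprod : (u + 1 - lam * f 1) / (-f P) * f P = -(u + 1 - lam * f 1) := by
        rw [div_neg, neg_mul, div_mul_cancel₀ _ (neg_ne_zero.mp hne)]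
      rw [hprod] at h
      linarith
    have hWhpsd : Wh.PosSemidef := by
      refine MM.psd_of_herm_re hWhherm fun x => ?_
      rw [show star x ⬝ᵥ Wh *ᵥ x = ((Wh * Matrix.vecMulVec x (star x)).trace) from
        (MM.trace_mul_vecMulVec Wh x).symm, hfherm _ (MM.vecMulVec_herm x)]
      exact hs4 _ (MM.vecMulVec_psd x)
    have hτtr : (Wh.trace).re = f 1 := by
      have h := hfherm 1 Matrix.isHermitian_one
      rw [Matrix.mul_one] at h
      exact h
    have hτ0 : 0 ≤ f 1 := hs4 1 Matrix.PosSemidef.one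
    have hCelem : u ≤ f (ptraceLeft Z₀) := hfC _ ⟨Z₀, ⟨hZ₀psd, hZ₀le⟩, rfl⟩
    have hτpos : 0 < f 1 := by
      rcases hτ0.lt_or_eq with h | h
      · exact h
      · exfalso
        have hWh0 : Wh = 0 := MM.psd_trace_eq_zero hWhpsd (by rw [hτtr, ← h])
        have hf0 : f (ptraceLeft Z₀) = 0 := by
          rw [← hfherm _ (MM.ptraceLeft_herm hZ₀psd.1), hWh0]
          simp
        have h01 := hs1 0 Matrix.PosSemidef.zero 0 1 le_rfl one_pos
        rw [map_zero] at h01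
        nlinarith
    have hσsub : SubNormalized ((f 1)⁻¹ • Wh) := by
      constructor
      · exact MM.psd_smul hWhpsd (inv_nonneg.mpr hτ0)
      · rw [Matrix.trace_smul, Complex.smul_re, hτtr, smul_eq_mul,
          inv_mul_cancel₀ (ne_of_gt hτpos)]
    have hlow : ∀ Z : Matrix (a × b) (a × b) ℂ, Z.PosSemidef →
        mLE ρABC (Z ⊗ₖ (1 : Matrix c c ℂ)) →
        lam ≤ ((((1 : Matrix a a ℂ) ⊗ₖ ((f 1)⁻¹ • Wh)) * Z).trace).re := by
      intro Z hZ1 hZ2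
      rw [hptr, show ((f 1)⁻¹ • Wh) * ptraceLeft Z = (f 1)⁻¹ • (Wh * ptraceLeft Z) from
        Matrix.smul_mul _ _ _, Matrix.trace_smul, Complex.smul_re,
        hfherm _ (MM.ptraceLeft_herm hZ1.1), smul_eq_mul]
      have hu := hfC _ ⟨Z, ⟨hZ1, hZ2⟩, rfl⟩
      calc lam = (f 1)⁻¹ * (lam * f 1) := by
            rw [mul_comm lam (f 1), ← mul_assoc, inv_mul_cancel₀ (ne_of_gt hτpos), one_mul]
        _ ≤ (f 1)⁻¹ * f (ptraceLeft Z) :=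
            mul_le_mul_of_nonneg_left (hs3.trans hu) (inv_nonneg.mpr hτ0)
    have hmemT : sInf (IT ((f 1)⁻¹ • Wh)) ∈ T := ⟨(f 1)⁻¹ • Wh, hσsub, rfl⟩
    have h1 : lam ≤ sInf (IT ((f 1)⁻¹ • Wh)) := by
      refine le_csInf ⟨_, hITne ((f 1)⁻¹ • Wh)⟩ ?_
      rintro y ⟨Z, hZ1, hZ2, rfl⟩
      exact hlow Z hZ1 hZ2
    have h2 : sInf (IT ((f 1)⁻¹ • Wh)) ≤ sSup T := le_csSup hTbdd hmemT
    rw [hlam] at h1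
    linarith
  obtain ⟨Z, ⟨hZ1, hZ2⟩, hZle⟩ := hclaim
  have hsupZ : sSup (IS Z) ≤ lam := by
    refine csSup_le ⟨0, hISzero Z⟩ ?_
    rintro y ⟨σ, hσ, rfl⟩
    rw [hptr]
    have h2 := MM.trace_mul_mono hσ.1 hZle
    have h3 : ((σ * (lam • (1 : Matrix b b ℂ))).trace).re = lam * σ.trace.re := by
      rw [Matrix.mul_smul, Matrix.mul_one, Matrix.trace_smul, Complex.smul_re, smul_eq_mul]
    rw [h3] at h2
    nlinarith [MM.trace_re_nonneg hσ.1, hσ.2, hlampos.le]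
  calc sInf S ≤ sSup (IS Z) := csInf_le hSbdd ⟨Z, hZ1, hZ2, rfl⟩
    _ ≤ sSup T + ε := by rw [← hlam]; exact hsupZ


open QIT in
/-- Minimax for the max-entropy SDP. -/
theorem stmt11 {a b c : Type*} [Fintype a] [Fintype b] [Fintype c]
    [DecidableEq a] [DecidableEq b] [DecidableEq c]
    (ρAB : Matrix (a × b) (a × b) ℂ) (hρ : SubNormalized ρAB)
    (ρABC : Matrix ((a × b) × c) ((a × b) × c) ℂ)
    (hpure : ∃ v : (a × b) × c → ℂ, ρABC = Matrix.vecMulVec v (star v))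
    (hptr : ptraceRight ρABC = ρAB) :
    sInf {x : ℝ | ∃ Z : Matrix (a × b) (a × b) ℂ, Z.PosSemidef ∧
        mLE ρABC (Z ⊗ₖ (1 : Matrix c c ℂ)) ∧
        x = sSup {y : ℝ | ∃ σ : Matrix b b ℂ, SubNormalized σ ∧
          y = ((((1 : Matrix a a ℂ) ⊗ₖ σ) * Z).trace).re}} =
    sSup {x : ℝ | ∃ σ : Matrix b b ℂ, SubNormalized σ ∧
        x = sInf {y : ℝ | ∃ Z : Matrix (a × b) (a × b) ℂ, Z.PosSemidef ∧
          mLE ρABC (Z ⊗ₖ (1 : Matrix c c ℂ)) ∧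
          y = ((((1 : Matrix a a ℂ) ⊗ₖ σ) * Z).trace).re}} := by
  classical
  obtain ⟨v, hv⟩ := hpure
  have hμ0 : 0 ≤ ∑ p, Complex.normSq (v p) :=
    Finset.sum_nonneg fun p _ => Complex.normSq_nonneg _
  have hZ₀psd : ((∑ p, Complex.normSq (v p)) •
      (1 : Matrix (a × b) (a × b) ℂ)).PosSemidef :=
    MM.psd_smul Matrix.PosSemidef.one hμ0
  have hfeas : mLE ρABC (((∑ p, Complex.normSq (v p)) •
      (1 : Matrix (a × b) (a × b) ℂ)) ⊗ₖ (1 : Matrix c c ℂ)) := by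
    show Matrix.PosSemidef _
    rw [Matrix.smul_kronecker, Matrix.one_kronecker_one, hv]
    refine MM.psd_of_herm_re ?_ fun x => ?_
    · show _ᴴ = _
      rw [Matrix.conjTranspose_sub, Matrix.conjTranspose_smul, star_trivial,
        Matrix.conjTranspose_one, (MM.vecMulVec_herm v).eq]
    · rw [Matrix.sub_mulVec, dotProduct_sub, Complex.sub_re, Matrix.smul_mulVec,
        Matrix.one_mulVec, dotProduct_smul, Complex.smul_re, MM.star_dot_self,
        MM.quad_vecMulVec]
      simp only [Complex.ofReal_re, smul_eq_mul]
      have hCS : Complex.normSq (star v ⬝ᵥ x) ≤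
          (∑ p, Complex.normSq (v p)) * ∑ i, Complex.normSq (x i) := by
        have h := MM.normSq_sum_mul_le (star v) x
        simpa [dotProduct, Pi.star_apply, Complex.normSq_conj] using h
      linarith
  exact MM.core ρABC _ hZ₀psd hfeas
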